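/- Two vectors z = (z₁, z₂) and w = (w₁, w₂) in ℍ² (quaternionic column vectors) lie in the same orbit of the action of the group of unit quaternions acting by simultaneous right multiplication (h : (z₁, z₂) ↦ (z₁h⁻¹, z₂h⁻¹)) if and only if |z₁| = |w₁|, |z₂| = |w₂|, and z₁·conj(z₂) = w₁·conj(w₂). -/

import Mathlib

open scoped Quaternion

/-- Two vectors `(z₁, z₂)` and `(w₁, w₂)` in `ℍ²` lie in the same orbit of the group
of unit quaternions acting by simultaneous right multiplication by `h⁻¹` if and only
if `|z₁| = |w₁|`, `|z₂| = |w₂|` and `z₁ • conj z₂ = w₁ • conj w₂`. -/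
theorem same_orbit_iff_quaternion_pair
    (z₁ z₂ w₁ w₂ : ℍ[ℝ]) :
    (∃ h : ℍ[ℝ], ‖h‖ = 1 ∧ w₁ = z₁ * h⁻¹ ∧ w₂ = z₂ * h⁻¹) ↔
      (‖z₁‖ = ‖w₁‖ ∧ ‖z₂‖ = ‖w₂‖ ∧ z₁ * star z₂ = w₁ * star w₂) := by
  constructor
  · rintro ⟨h, hn, rfl, rfl⟩
    have hinv : ‖h⁻¹‖ = 1 := by rw [norm_inv, hn]; norm_num
    have hmul : h⁻¹ * star h⁻¹ = 1 := by
      rw [Quaternion.self_mul_star, Quaternion.normSq_eq_norm_mul_self, hinv]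
      norm_num
    refine ⟨by rw [norm_mul, hinv, mul_one], by rw [norm_mul, hinv, mul_one], ?_⟩
    rw [star_mul, mul_assoc, ← mul_assoc h⁻¹, hmul, one_mul]
  · rintro ⟨h1, h2, h3⟩
    by_cases hz1 : z₁ = 0
    · have hw1 : w₁ = 0 := by
        have := h1; rw [hz1, norm_zero] at this
        exact (norm_eq_zero.mp this.symm)
      by_cases hz2 : z₂ = 0
      · have hw2 : w₂ = 0 := by
          have := h2; rw [hz2, norm_zero] at this
          exact (norm_eq_zero.mp this.symm)
        exact ⟨1, by simp, by simp [hz1, hw1], by simp [hz2, hw2]⟩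
      · have hw2 : w₂ ≠ 0 := by
          intro h0; rw [h0, norm_zero, norm_eq_zero] at h2; exact hz2 h2
        refine ⟨w₂⁻¹ * z₂, ?_, ?_, ?_⟩
        · rw [norm_mul, norm_inv, ← h2, inv_mul_cancel₀ (norm_ne_zero_iff.mpr hz2)]
        · simp [hz1, hw1]
        · rw [mul_inv_rev, inv_inv, ← mul_assoc, mul_inv_cancel₀ hz2, one_mul]
    · have hw1 : w₁ ≠ 0 := by
        intro h0; rw [h0, norm_zero, norm_eq_zero] at h1; exact hz1 h1
      have key : z₂ * star z₁ = w₂ * star w₁ := by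
        have := congrArg star h3
        simpa [star_mul] using this
      have hns : Quaternion.normSq z₁ = Quaternion.normSq w₁ := by
        rw [Quaternion.normSq_eq_norm_mul_self, Quaternion.normSq_eq_norm_mul_self, h1]
      refine ⟨w₁⁻¹ * z₁, ?_, ?_, ?_⟩
      · rw [norm_mul, norm_inv, ← h1, inv_mul_cancel₀ (norm_ne_zero_iff.mpr hz1)]
      · rw [mul_inv_rev, inv_inv, ← mul_assoc, mul_inv_cancel₀ hz1, one_mul]
      · rw [mul_inv_rev, inv_inv, ← mul_assoc]
        rw [Quaternion.inv_def, Algebra.mul_smul_comm, key, smul_mul_assoc,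
          mul_assoc, Quaternion.star_mul_self, ← hns]
        rw [← Quaternion.coe_mul_eq_smul, Quaternion.coe_commutes, mul_assoc,
          ← Quaternion.coe_mul, mul_inv_cancel₀ (Quaternion.normSq_ne_zero.mpr hz1),
          Quaternion.coe_one, mul_one]
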